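/- Finite speed of propagation: if u: ℤ × ℤ → ℂ solves the discrete wave equation with u(n, 0) = f(n) supported on |n| ≤ r and (u(n, 1) − u(n, −1))/2 = g(n) supported on |n| ≤ r + 1, then u(n, t) = 0 whenever |n| > r + |t|. -/
import Mathlib

lemma abs_neighbor_bound (r n : ℤ) (h : r + 1 < |n|) : r < |n + 1| ∧ r < |n - 1| := by
  have h1 : |n| ≤ |n + 1| + 1 := by simpa using abs_add_le (n + 1) (-1)
  have h2 : |n| ≤ |n - 1| + 1 := by simpa using abs_add_le (n - 1) 1
  constructor <;> linarith

/-- Finite speed of propagation for the discrete wave equation: if the standard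
initial conditions `f(n) = u(n,0)` and `g(n) = (u(n,1) − u(n,−1))/2` are supported
on `|n| ≤ r` and `|n| ≤ r + 1` respectively, then `u(n, t) = 0` for `|n| > r + |t|`. -/
theorem discrete_wave_finite_speed (u : ℤ → ℤ → ℂ) (f g : ℤ → ℂ) (r : ℤ)
    (hwave : ∀ n t : ℤ, u n (t + 1) + u n (t - 1) = u (n + 1) t + u (n - 1) t)
    (hf : ∀ n : ℤ, u n 0 = f n)
    (hg : ∀ n : ℤ, (u n 1 - u n (-1)) / 2 = g n)
    (hfsupp : ∀ n : ℤ, r < |n| → f n = 0)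
    (hgsupp : ∀ n : ℤ, r + 1 < |n| → g n = 0) :
    ∀ n t : ℤ, r + |t| < |n| → u n t = 0 := by
  have h0 : ∀ n : ℤ, r < |n| → u n 0 = 0 := fun n hn => by
    rw [hf]; exact hfsupp n hn
  have h1 : ∀ n : ℤ, r + 1 < |n| → u n 1 = 0 ∧ u n (-1) = 0 := by
    intro n hn
    obtain ⟨hb1, hb2⟩ := abs_neighbor_bound r n hn
    have hsum : u n 1 + u n (-1) = 0 := by
      have hw := hwave n 0
      norm_num at hw
      rw [hw, h0 (n + 1) hb1, h0 (n - 1) hb2]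
      ring
    have hdiff : u n 1 - u n (-1) = 0 := by
      have hgn := hg n
      rw [hgsupp n hn] at hgn
      field_simp at hgn
      linear_combination hgn
    constructor
    · linear_combination (hsum + hdiff) / 2
    · linear_combination (hsum - hdiff) / 2
  have key : ∀ k : ℕ, (∀ n : ℤ, r + (k : ℤ) < |n| → u n (k : ℤ) = 0) ∧
      (∀ n : ℤ, r + (k : ℤ) < |n| → u n (-(k : ℤ)) = 0) := by
    intro k
    induction k using Nat.twoStepInduction with
    | zero =>
      refine ⟨fun n hn => ?_, fun n hn => ?_⟩ <;>
        simpa using h0 n (by simpa using hn)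
    | one =>
      refine ⟨fun n hn => ?_, fun n hn => ?_⟩
      · exact_mod_cast (h1 n (by push_cast at hn ⊢; linarith)).1
      · exact_mod_cast (h1 n (by push_cast at hn ⊢; linarith)).2
    | more k ih1 ih2 =>
      have hbb : ∀ n : ℤ, r + ((k : ℤ) + 2) < |n| →
          r + ((k + 1 : ℕ) : ℤ) < |n + 1| ∧ r + ((k + 1 : ℕ) : ℤ) < |n - 1| := by
        intro n hn
        have := abs_neighbor_bound (r + ((k : ℤ) + 1)) n (by linarith)
        push_cast
        exact ⟨by linarith [this.1], by linarith [this.2]⟩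
      constructor
      · intro n hn
        push_cast at hn
        obtain ⟨hc1, hc2⟩ := hbb n hn
        have hw := hwave n ((k : ℤ) + 1)
        have e1 : (k : ℤ) + 1 + 1 = ((k + 2 : ℕ) : ℤ) := by push_cast; ring
        have e2 : (k : ℤ) + 1 - 1 = (k : ℤ) := by ring
        have e3 : ((k + 1 : ℕ) : ℤ) = (k : ℤ) + 1 := by push_cast; ring
        rw [e1, e2] at hw
        have z1 : u (n + 1) ((k : ℤ) + 1) = 0 := e3 ▸ ih2.1 (n + 1) hc1
        have z2 : u (n - 1) ((k : ℤ) + 1) = 0 := e3 ▸ ih2.1 (n - 1) hc2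
        have z3 : u n (k : ℤ) = 0 := ih1.1 n (by linarith)
        linear_combination hw + z1 + z2 - z3
      · intro n hn
        push_cast at hn
        obtain ⟨hc1, hc2⟩ := hbb n hn
        have hw := hwave n (-(k : ℤ) - 1)
        have e1 : -(k : ℤ) - 1 + 1 = -(k : ℤ) := by ring
        have e2 : -(k : ℤ) - 1 - 1 = -((k + 2 : ℕ) : ℤ) := by push_cast; ring
        have e3 : -((k + 1 : ℕ) : ℤ) = -(k : ℤ) - 1 := by push_cast; ring
        rw [e1, e2] at hw
        have z1 : u (n + 1) (-(k : ℤ) - 1) = 0 := e3 ▸ ih2.2 (n + 1) hc1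
        have z2 : u (n - 1) (-(k : ℤ) - 1) = 0 := e3 ▸ ih2.2 (n - 1) hc2
        have z3 : u n (-(k : ℤ)) = 0 := ih1.2 n (by linarith)
        linear_combination hw + z1 + z2 - z3
  intro n t hnt
  rcases Int.natAbs_eq t with h | h
  · rw [h]
    exact (key t.natAbs).1 n (by rw [← Int.abs_eq_natAbs]; exact hnt)
  · rw [h]
    exact (key t.natAbs).2 n (by rw [← Int.abs_eq_natAbs]; exact hnt)
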